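/- arXiv:1506.09150 — 2 statements merged into one kernel-verified Lean document; each statement's English description precedes it below -/
import Mathlib

section
/- Let H be a separable real Hilbert space, C₀ a positive self-adjoint injective trace-class operator on H with Cameron–Martin space H¹ = Im(C₀^{1/2}), and ξ ∼ N(0, C₀). Suppose Φ_μ : H → ℝ is Fréchet differentiable at every point of the form x + m₀ + ξ and that the family of derivatives is uniformly integrable enough to differentiate under the expectation (e.g. E[‖Φ'_μ(x + m₀ + ξ)‖] is locally bounded and dominated). Then J(x) = E[Φ_μ(x + m₀ + ξ)] + (1/2)‖x‖²_{C₀} + log Z_μ is Fréchet differentiable on H¹, with first variation J'(x) = E[Φ'_μ(x + m₀ + ξ)] + C₀^{−1}x, and, if Φ_μ is twice Fréchet differentiable with analogous domination, second variation J''(x) = E[Φ''_μ(x + m₀ + ξ)] + C₀^{−1}. -/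
open MeasureTheory Real
open scoped RealInnerProductSpace

set_option maxHeartbeats 2000000

/-- **First and second variations of the relative entropy objective.**
`H` is a separable real Hilbert space with Gaussian measure `N(0, C₀)` (the law `μG` of `ξ`),
and `E` is the Cameron–Martin space `H¹ = Im (C₀^{1/2})` with its Cameron–Martin inner
product, realized as a Hilbert space with injective embedding `ι : E →L H` such that
`C₀ = ι ∘ ι*` (the map `C₀E = ι*` satisfies `⟪C₀E u, e⟫_E = ⟪u, ι e⟫_H`).
Let `J (x) = E[Φμ (x + m₀ + ξ)] + ½ ‖x‖²_{C₀} + log Zμ` on `H¹`.  If `Φμ` is Fréchet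
differentiable with derivative `Φ'` at every relevant point and the derivatives are dominated
(uniformly integrable enough to differentiate under the expectation), then `J` is Fréchet
differentiable on `H¹` with `J' (x) = E[Φ' (x + m₀ + ξ)] + C₀^{-1} x`, the latter term
interpreted in the dual pairing on `H¹` (i.e. `h ↦ ⟪x, h⟫_{C₀}`); if moreover `Φμ` is twice
Fréchet differentiable with analogous domination, then
`J'' (x) = E[Φ'' (x + m₀ + ξ)] + C₀^{-1}` as the derivative of `x ↦ J' (x)`. -/
theorem relative_entropy_first_and_second_variation
    {H : Type*} [NormedAddCommGroup H] [InnerProductSpace ℝ H] [CompleteSpace H]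
    [SecondCountableTopology H] [MeasurableSpace H] [BorelSpace H]
    {E : Type*} [NormedAddCommGroup E] [InnerProductSpace ℝ E] [CompleteSpace E]
    -- the Cameron–Martin embedding ι : H¹ → H and the covariance C₀ = ι ∘ ι*
    (ι : E →L[ℝ] H) (hι : Function.Injective ι)
    (C₀ : H →L[ℝ] H) (hCsa : IsSelfAdjoint C₀) (hCpos : ∀ u : H, 0 ≤ ⟪C₀ u, u⟫)
    (hCinj : Function.Injective C₀)
    (C₀E : H →L[ℝ] E) (hfactor : ∀ u : H, ι (C₀E u) = C₀ u)
    (hadj : ∀ (u : H) (e : E), ⟪C₀E u, e⟫ = ⟪u, ι e⟫)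
    -- ξ ∼ N(0, C₀): the law μG has characteristic functional of a centered Gaussian
    (μG : Measure H) [IsProbabilityMeasure μG]
    (hGauss : ∀ t : H, ∫ u, Complex.exp (Complex.I * (⟪t, u⟫ : ℝ)) ∂μG =
      Complex.exp (-(1 / 2 : ℂ) * (⟪C₀ t, t⟫ : ℝ)))
    (m₀ : H) (Zμ : ℝ) (hZμ : 0 < Zμ)
    -- Φμ is Fréchet differentiable at every point of the form x + m₀ + ξ
    (Φμ : H → ℝ) (Φ' : H → H →L[ℝ] ℝ)
    (hΦdiff : ∀ u : H, HasFDerivAt Φμ (Φ' u) u)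
    (hΦint : ∀ x : E, Integrable (fun c => Φμ (ι x + m₀ + c)) μG)
    (hΦ'meas : ∀ x : E,
      AEStronglyMeasurable (fun c => (Φ' (ι x + m₀ + c)).comp ι) μG)
    -- domination: E[‖Φ' (x + m₀ + ξ)‖] is locally bounded and dominated
    (hdom : ∀ x : E, ∃ ε > 0, ∃ bound : H → ℝ, Integrable bound μG ∧
      ∀ᵐ c ∂μG, ∀ y : E, ‖y - x‖ < ε → ‖Φ' (ι y + m₀ + c)‖ ≤ bound c)
    -- Φμ is twice Fréchet differentiable, with analogous domination
    (Φ'' : H → H →L[ℝ] H →L[ℝ] ℝ)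
    (hΦ''diff : ∀ u : H, HasFDerivAt Φ' (Φ'' u) u)
    (hΦ''meas : ∀ x : E,
      AEStronglyMeasurable (fun c => (Φ'' (ι x + m₀ + c)).bilinearComp ι ι) μG)
    (hdom2 : ∀ x : E, ∃ ε > 0, ∃ bound : H → ℝ, Integrable bound μG ∧
      ∀ᵐ c ∂μG, ∀ y : E, ‖y - x‖ < ε → ‖Φ'' (ι y + m₀ + c)‖ ≤ bound c)
    -- the inner product of H¹ = (E, ⟪·,·⟫) as a continuous bilinear map
    (innerB : E →L[ℝ] E →L[ℝ] ℝ) (hinnerB : ∀ u v : E, innerB u v = ⟪u, v⟫)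
    -- the objective J on H¹
    (J : E → ℝ)
    (hJ : ∀ x : E,
      J x = (∫ c, Φμ (ι x + m₀ + c) ∂μG) + (1 / 2) * ‖x‖ ^ 2 + log Zμ) :
    -- first variation: J'(x) = E[Φ'(x + m₀ + ξ)] + C₀⁻¹ x in the dual pairing on H¹
    (∀ x : E, HasFDerivAt J
      ((∫ c, (Φ' (ι x + m₀ + c)).comp ι ∂μG) + innerB x) x) ∧
    -- second variation: J''(x) = E[Φ''(x + m₀ + ξ)] + C₀⁻¹ as derivative of x ↦ J'(x)
    (∀ x : E, HasFDerivAt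
      (fun y : E => (∫ c, (Φ' (ι y + m₀ + c)).comp ι ∂μG) + innerB y)
      ((∫ c, (Φ'' (ι x + m₀ + c)).bilinearComp ι ι ∂μG) + innerB) x) := by
  -- continuity of Φμ
  have hΦcont : Continuous Φμ := by
    rw [continuous_iff_continuousAt]
    exact fun u => (hΦdiff u).continuousAt
  -- the affine map y ↦ ι y + m₀ + c and its derivative
  have haff : ∀ (c : H) (y : E), HasFDerivAt (fun y : E => ι y + m₀ + c) ι y := by
    intro c y
    simpa using (ι.hasFDerivAt.add_const m₀).add_const c
  -- first variation of the integral term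
  have hI1 : ∀ x : E, HasFDerivAt (fun y : E => ∫ c, Φμ (ι y + m₀ + c) ∂μG)
      (∫ c, (Φ' (ι x + m₀ + c)).comp ι ∂μG) x := by
    intro x
    obtain ⟨ε, hε, bound, hbint, hbd⟩ := hdom x
    refine hasFDerivAt_integral_of_dominated_of_fderiv_le
      (F := fun y c => Φμ (ι y + m₀ + c))
      (F' := fun y c => (Φ' (ι y + m₀ + c)).comp ι)
      (bound := fun c => ‖ι‖ * bound c) (Metric.ball_mem_nhds x hε) ?_ (hΦint x) (hΦ'meas x) ?_ (hbint.const_mul _) ?_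
    · filter_upwards with y
      exact (hΦcont.comp (continuous_const.add continuous_id)).aestronglyMeasurable
    · filter_upwards [hbd] with c hc y hy
      have h1 : ‖Φ' (ι y + m₀ + c)‖ ≤ bound c := hc y (by
        simpa [dist_eq_norm] using hy)
      calc ‖(Φ' (ι y + m₀ + c)).comp ι‖ ≤ ‖Φ' (ι y + m₀ + c)‖ * ‖ι‖ :=
            ContinuousLinearMap.opNorm_comp_le _ _
        _ ≤ bound c * ‖ι‖ := by
            have := norm_nonneg ι
            nlinarith [(norm_nonneg (Φ' (ι y + m₀ + c))).trans h1]
        _ = ‖ι‖ * bound c := mul_comm _ _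
    · filter_upwards with c y _
      exact (hΦdiff (ι y + m₀ + c)).comp y (haff c y)
  -- second variation of the integral term
  have hI2 : ∀ x : E, HasFDerivAt (fun y : E => ∫ c, (Φ' (ι y + m₀ + c)).comp ι ∂μG)
      (∫ c, (Φ'' (ι x + m₀ + c)).bilinearComp ι ι ∂μG) x := by
    intro x
    obtain ⟨ε, hε, bound, hbint, hbd⟩ := hdom2 x
    -- the fixed continuous linear map L ↦ L.comp ι
    set R : (H →L[ℝ] ℝ) →L[ℝ] (E →L[ℝ] ℝ) := (ContinuousLinearMap.compL ℝ E H ℝ).flip ι with hR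
    have hRapp : ∀ L : H →L[ℝ] ℝ, R L = L.comp ι := fun L => rfl
    -- pointwise differentiability of y ↦ (Φ' (ι y + m₀ + c)).comp ι
    have hptdiff : ∀ (c : H) (y : E),
        HasFDerivAt (fun y : E => (Φ' (ι y + m₀ + c)).comp ι)
          ((Φ'' (ι y + m₀ + c)).bilinearComp ι ι) y := by
      intro c y
      have h1 : HasFDerivAt (fun y : E => Φ' (ι y + m₀ + c))
          ((Φ'' (ι y + m₀ + c)).comp ι) y :=
        (hΦ''diff (ι y + m₀ + c)).comp y (haff c y)
      have h2 : HasFDerivAt (fun y : E => R (Φ' (ι y + m₀ + c)))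
          (R.comp ((Φ'' (ι y + m₀ + c)).comp ι)) y := R.hasFDerivAt.comp y h1
      have heq : R.comp ((Φ'' (ι y + m₀ + c)).comp ι)
          = (Φ'' (ι y + m₀ + c)).bilinearComp ι ι := by
        ext u v
        simp [hRapp, ContinuousLinearMap.bilinearComp_apply]
      rw [heq] at h2
      exact h2
    have hmeas2 : ∀ x : E, Integrable (fun c => (Φ' (ι x + m₀ + c)).comp ι) μG := by
      intro z
      obtain ⟨ε', hε', bound', hbint', hbd'⟩ := hdom z
      refine (hbint'.const_mul ‖ι‖).mono' (hΦ'meas z) ?_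
      filter_upwards [hbd'] with c hc
      have h1 : ‖Φ' (ι z + m₀ + c)‖ ≤ bound' c := hc z (by simpa using hε')
      calc ‖(Φ' (ι z + m₀ + c)).comp ι‖ ≤ ‖Φ' (ι z + m₀ + c)‖ * ‖ι‖ :=
            ContinuousLinearMap.opNorm_comp_le _ _
        _ ≤ bound' c * ‖ι‖ := by
            have := norm_nonneg ι
            nlinarith [(norm_nonneg (Φ' (ι z + m₀ + c))).trans h1]
        _ = ‖ι‖ * bound' c := mul_comm _ _
    refine hasFDerivAt_integral_of_dominated_of_fderiv_le
      (F := fun y c => (Φ' (ι y + m₀ + c)).comp ι)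
      (F' := fun y c => (Φ'' (ι y + m₀ + c)).bilinearComp ι ι)
      (bound := fun c => ‖ι‖ * ‖ι‖ * bound c) (Metric.ball_mem_nhds x hε) ?_ (hmeas2 x) (hΦ''meas x) ?_
      (hbint.const_mul _) ?_
    · filter_upwards with y; exact hΦ'meas y
    · filter_upwards [hbd] with c hc y hy
      have h1 : ‖Φ'' (ι y + m₀ + c)‖ ≤ bound c := hc y (by simpa [dist_eq_norm] using hy)
      have hb0 : (0:ℝ) ≤ bound c := (ContinuousLinearMap.opNorm_nonneg _).trans h1
      refine ContinuousLinearMap.opNorm_le_bound _ (by positivity) fun u => ?_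
      refine ContinuousLinearMap.opNorm_le_bound _ (by positivity) fun v => ?_
      calc ‖(Φ'' (ι y + m₀ + c)).bilinearComp ι ι u v‖
          = ‖Φ'' (ι y + m₀ + c) (ι u) (ι v)‖ := by
            rw [ContinuousLinearMap.bilinearComp_apply]
        _ ≤ ‖Φ'' (ι y + m₀ + c) (ι u)‖ * ‖ι v‖ := ContinuousLinearMap.le_opNorm _ _
        _ ≤ ‖Φ'' (ι y + m₀ + c)‖ * ‖ι u‖ * ‖ι v‖ := by
            have := ContinuousLinearMap.le_opNorm (Φ'' (ι y + m₀ + c)) (ι u)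
            have := norm_nonneg (ι v)
            nlinarith
        _ ≤ bound c * (‖ι‖ * ‖u‖) * (‖ι‖ * ‖v‖) := by
            have h2 := ContinuousLinearMap.le_opNorm ι u
            have h3 := ContinuousLinearMap.le_opNorm ι v
            have h4 := norm_nonneg (ι u)
            have h5 := norm_nonneg (ι v)
            have h6 := norm_nonneg (Φ'' (ι y + m₀ + c))
            have h7 : (0:ℝ) ≤ bound c := h6.trans h1
            have h8 : (0:ℝ) ≤ ‖ι‖ * ‖u‖ := (norm_nonneg _).trans h2
            have h9 : (0:ℝ) ≤ ‖ι‖ * ‖v‖ := (norm_nonneg _).trans h3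
            exact mul_le_mul (mul_le_mul h1 h2 h4 h7) h3 h5 (mul_nonneg h7 h8)
        _ = ‖ι‖ * ‖ι‖ * bound c * ‖u‖ * ‖v‖ := by ring
    · filter_upwards with c y _
      exact hptdiff c y
  -- derivative of the quadratic term
  have hquad : ∀ x : E, HasFDerivAt (fun y : E => (1 / 2 : ℝ) * ‖y‖ ^ 2) (innerB x) x := by
    intro x
    have h1 : HasFDerivAt (fun y : E => ‖y‖ ^ 2) (2 • innerSL ℝ x) x := by
      simpa using (hasStrictFDerivAt_norm_sq x).hasFDerivAt
    have h2 := h1.const_mul (1 / 2 : ℝ)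
    have heq : (1 / 2 : ℝ) • (2 • innerSL ℝ x) = innerB x := by
      ext v
      simp [hinnerB, real_inner_comm]
    rwa [heq] at h2
  constructor
  · intro x
    have hJfun : J = fun y : E =>
        ((∫ c, Φμ (ι y + m₀ + c) ∂μG) + (1 / 2) * ‖y‖ ^ 2) + log Zμ := by
      funext y; rw [hJ y]
    rw [hJfun]
    exact ((hI1 x).add (hquad x)).add_const (log Zμ)
  · intro x
    exact (hI2 x).add innerB.hasFDerivAt
end

section
/- Let H be a separable real Hilbert space and C₀ a positive self-adjoint injective trace-class operator with largest eigenvalue λ₁ > 0 and Cameron–Martin space H¹ = Im(C₀^{1/2}). Let Φ : H¹ → ℝ be such that G(x) := E[Φ''(x + m₀ + ξ)] exists for ξ ∼ N(0, C₀), let J''(x) = G(x) + C₀^{−1} (as quadratic forms on H¹), and let x_⋆ ∈ H¹ satisfy J'(x_⋆) = 0 where J'(x) = E[Φ'(x + m₀ + ξ)] + C₀^{−1}x, with J twice Fréchet differentiable on a convex open set U_⋆ ∋ x_⋆. If there is θ ∈ [0, 1) such that for all x ∈ U_⋆ and all nonzero u ∈ H, ⟨G(x)u, u⟩ ≥ −θ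 λ₁^{−1} ‖u‖², then for all x ∈ U_⋆, ⟨x − x_⋆, f(x)⟩_{C₀} ≥ (1 − θ)‖x − x_⋆‖²_{C₀}, where f(x) = C₀ E[Φ'(x + m₀ + ξ)] + x. -/
open MeasureTheory Real
open scoped RealInnerProductSpace

/-- **The spectral convexity condition implies the monotonicity condition in the
Cameron–Martin inner product.**
`H` is a separable real Hilbert space, `C₀` a positive self-adjoint injective trace-class
operator with largest eigenvalue `λ₁ > 0`, and `E` is the Cameron–Martin space
`H¹ = Im (C₀^{1/2})` realized via the embedding `ι : E →L H` with `C₀ = ι ∘ ι*`,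
`C₀E = ι*`.  Let `G (x) = E[Φ''(x + m₀ + ξ)]` for `ξ ∼ N(0, C₀)`, let
`J'' (x) = G (x) + C₀⁻¹` as quadratic forms on `H¹` (i.e. the derivative `DJ` of the
preconditioned map `f (x) = C₀ E[Φ'(x + m₀ + ξ)] + x` satisfies
`⟪DJ x u, u⟫_{C₀} = ⟪G x u, u⟫ + ‖u‖²_{C₀}`), and let `x⋆ ∈ H¹` satisfy `J'(x⋆) = 0`,
with `J` twice Fréchet differentiable on a convex open `U⋆ ∋ x⋆`.  If there is `θ ∈ [0, 1)`
such that `⟪G(x) u, u⟫ ≥ -θ λ₁⁻¹ ‖u‖²` for all `x ∈ U⋆` and nonzero `u ∈ H`, then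
`⟪x - x⋆, f (x)⟫_{C₀} ≥ (1 - θ) ‖x - x⋆‖²_{C₀}` for all `x ∈ U⋆`. -/
theorem spectral_condition_implies_monotonicity
    {H : Type*} [NormedAddCommGroup H] [InnerProductSpace ℝ H] [CompleteSpace H]
    [SecondCountableTopology H] [MeasurableSpace H] [BorelSpace H]
    {E : Type*} [NormedAddCommGroup E] [InnerProductSpace ℝ E] [CompleteSpace E]
    -- Cameron–Martin space: embedding ι : E = H¹ → H, C₀ = ι ∘ ι*, C₀E = ι*
    (ι : E →L[ℝ] H) (hι : Function.Injective ι)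
    (C₀ : H →L[ℝ] H) (hCsa : IsSelfAdjoint C₀) (hCpos : ∀ u : H, 0 ≤ ⟪C₀ u, u⟫)
    (hCinj : Function.Injective C₀)
    (C₀E : H →L[ℝ] E) (hfactor : ∀ u : H, ι (C₀E u) = C₀ u)
    (hadj : ∀ (u : H) (e : E), ⟪C₀E u, e⟫ = ⟪u, ι e⟫)
    -- λ₁ is the largest eigenvalue of C₀
    (lam₁ : ℝ) (hlam₁pos : 0 < lam₁)
    (heig : ∃ v : H, v ≠ 0 ∧ C₀ v = lam₁ • v)
    (hlargest : ∀ u : H, ⟪C₀ u, u⟫ ≤ lam₁ * ‖u‖ ^ 2)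
    -- ξ ∼ N(0, C₀)
    (μG : Measure H) [IsProbabilityMeasure μG]
    (hGauss : ∀ t : H, ∫ u, Complex.exp (Complex.I * (⟪t, u⟫ : ℝ)) ∂μG =
      Complex.exp (-(1 / 2 : ℂ) * (⟪C₀ t, t⟫ : ℝ)))
    (m₀ : H)
    -- Φ with gradient gradΦ and Hessian Φ''; G (x) = E[Φ''(x + m₀ + ξ)]
    (Φ : H → ℝ) (gradΦ : H → H)
    (hΦ' : ∀ u : H, HasGradientAt Φ (gradΦ u) u)
    (Φ'' : H → H →L[ℝ] H) (hΦ'' : ∀ u : H, HasFDerivAt gradΦ (Φ'' u) u)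
    (hgradint : ∀ x : E, Integrable (fun c => gradΦ (ι x + m₀ + c)) μG)
    (hGint : ∀ x : E, Integrable (fun c => Φ'' (ι x + m₀ + c)) μG)
    (G : E → H →L[ℝ] H) (hG : ∀ x : E, G x = ∫ c, Φ'' (ι x + m₀ + c) ∂μG)
    -- U⋆ is a convex open neighborhood of the root x⋆ of J'
    (Ustar : Set E) (hUopen : IsOpen Ustar) (hUconv : Convex ℝ Ustar)
    (xstar : E) (hxstar : xstar ∈ Ustar)
    (hroot : C₀E (∫ c, gradΦ (ι xstar + m₀ + c) ∂μG) + xstar = 0)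
    -- J is twice Fréchet differentiable on U⋆, with J''(x) = G(x) + C₀⁻¹ as quadratic
    -- forms on H¹: the derivative DJ of f (x) = C₀ E[Φ'(x + m₀ + ξ)] + x satisfies
    -- ⟪DJ x u, u⟫_{C₀} = ⟪G(x) u, u⟫ + ‖u‖²_{C₀}
    (DJ : E → E →L[ℝ] E)
    (hJdiff : ∀ x ∈ Ustar, HasFDerivAt
      (fun y : E => C₀E (∫ c, gradΦ (ι y + m₀ + c) ∂μG) + y) (DJ x) x)
    (hquad : ∀ x ∈ Ustar, ∀ u : E, ⟪DJ x u, u⟫ = ⟪G x (ι u), ι u⟫ + ‖u‖ ^ 2)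
    -- the spectral lower bound on G
    (θ : ℝ) (hθ : 0 ≤ θ) (hθ1 : θ < 1)
    (hspec : ∀ x ∈ Ustar, ∀ u : H, u ≠ 0 → -(θ * lam₁⁻¹) * ‖u‖ ^ 2 ≤ ⟪G x u, u⟫) :
    ∀ x ∈ Ustar, (1 - θ) * ‖x - xstar‖ ^ 2 ≤
      ⟪x - xstar, C₀E (∫ c, gradΦ (ι x + m₀ + c) ∂μG) + x⟫ := by
  intro x hx
  set u : E := x - xstar with hu
  set f : E → E := fun y => C₀E (∫ c, gradΦ (ι y + m₀ + c) ∂μG) + y with hf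
  -- ‖ι e‖² ≤ λ₁ ‖e‖²
  have hιnorm : ∀ e : E, ‖ι e‖ ^ 2 ≤ lam₁ * ‖e‖ ^ 2 := by
    intro e
    have h1 : ⟪C₀E (ι e), e⟫ = ‖ι e‖ ^ 2 := by
      rw [hadj]; exact real_inner_self_eq_norm_sq _
    have h2 : ‖C₀E (ι e)‖ ^ 2 = ⟪C₀ (ι e), ι e⟫ := by
      calc ‖C₀E (ι e)‖ ^ 2 = ⟪C₀E (ι e), C₀E (ι e)⟫ := (real_inner_self_eq_norm_sq _).symm
        _ = ⟪ι e, ι (C₀E (ι e))⟫ := hadj _ _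
        _ = ⟪C₀ (ι e), ι e⟫ := by rw [hfactor]; exact real_inner_comm _ _
    have h3 : ‖ι e‖ ^ 2 ≤ ‖C₀E (ι e)‖ * ‖e‖ := by
      rw [← h1]; exact real_inner_le_norm _ _
    have h4 : ‖C₀E (ι e)‖ ^ 2 ≤ lam₁ * ‖ι e‖ ^ 2 := h2 ▸ hlargest (ι e)
    by_cases he : ι e = 0
    · rw [he]; simp; positivity
    · have ha : 0 < ‖ι e‖ := norm_pos_iff.mpr he
      have ha2 : 0 < ‖ι e‖ ^ 2 := by positivity
      have h3' : ‖ι e‖ ^ 2 * ‖ι e‖ ^ 2 ≤ (‖C₀E (ι e)‖ * ‖e‖) * (‖C₀E (ι e)‖ * ‖e‖) :=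
        mul_le_mul h3 h3 (by positivity) (by positivity)
      have h4' : (‖C₀E (ι e)‖ * ‖e‖) * (‖C₀E (ι e)‖ * ‖e‖) ≤ lam₁ * ‖ι e‖ ^ 2 * (‖e‖ * ‖e‖) := by
        nlinarith [sq_nonneg ‖e‖]
      refine le_of_mul_le_mul_right ?_ ha2
      nlinarith [h3', h4']
  -- coercivity of DJ
  have hcoerc : ∀ y ∈ Ustar, ∀ e : E, (1 - θ) * ‖e‖ ^ 2 ≤ ⟪DJ y e, e⟫ := by
    intro y hy e
    by_cases he : e = 0
    · simp [he]
    · have hιe : ι e ≠ 0 := fun h => he (hι (by simpa using h))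
      have h1 := hspec y hy (ι e) hιe
      have h2 := hquad y hy e
      have h3 : θ * lam₁⁻¹ * ‖ι e‖ ^ 2 ≤ θ * ‖e‖ ^ 2 := by
        have h4 : lam₁⁻¹ * ‖ι e‖ ^ 2 ≤ ‖e‖ ^ 2 := by
          rw [inv_mul_le_iff₀ hlam₁pos]
          exact (hιnorm e).trans_eq (by ring)
        calc θ * lam₁⁻¹ * ‖ι e‖ ^ 2 = θ * (lam₁⁻¹ * ‖ι e‖ ^ 2) := by ring
          _ ≤ θ * ‖e‖ ^ 2 := by exact mul_le_mul_of_nonneg_left h4 hθ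
      linarith
  -- the segment stays in Ustar
  have hpath : ∀ t ∈ Set.Icc (0 : ℝ) 1, xstar + t • u ∈ Ustar := by
    intro t ht
    have heq : xstar + t • u = (1 - t) • xstar + t • x := by
      rw [hu]; module
    rw [heq]
    exact hUconv hxstar hx (by linarith [ht.2]) ht.1 (by ring)
  -- the 1-d function along the segment
  set φ : ℝ → ℝ := fun t => ⟪u, f (xstar + t • u)⟫ with hφ
  have hd : ∀ t : ℝ, xstar + t • u ∈ Ustar →
      HasDerivAt φ ⟪u, DJ (xstar + t • u) u⟫ t := by
    intro t ht
    have h1 : HasDerivAt (fun s : ℝ => xstar + s • u) u t := by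
      simpa using ((hasDerivAt_id t).smul_const u).const_add xstar
    have h2 : HasDerivAt (fun s : ℝ => f (xstar + s • u)) (DJ (xstar + t • u) u) t :=
      by have := (hJdiff _ ht).comp_hasDerivAt t h1; exact this
    have h3 := (hasDerivAt_const t u).inner ℝ h2
    simpa using h3
  have hmvt := Convex.mul_sub_le_image_sub_of_le_deriv (convex_Icc (0:ℝ) 1)
    (f := φ) (C := (1 - θ) * ‖u‖ ^ 2)
    (fun t ht => (hd t (hpath t ht)).continuousAt.continuousWithinAt)
    (fun t ht => (hd t (hpath t (interior_subset ht))).differentiableAt.differentiableWithinAt)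
    (fun t ht => by
      rw [(hd t (hpath t (interior_subset ht))).deriv, real_inner_comm]
      exact hcoerc _ (hpath t (interior_subset ht)) u)
    0 (Set.mem_Icc.mpr ⟨le_refl 0, zero_le_one⟩)
    1 (Set.mem_Icc.mpr ⟨zero_le_one, le_refl 1⟩) zero_le_one
  have hφ0 : φ 0 = 0 := by
    have : xstar + (0 : ℝ) • u = xstar := by simp
    simp only [hφ, this, hf]
    rw [hroot]
    simp
  have hφ1 : φ 1 = ⟪u, f x⟫ := by
    have : xstar + (1 : ℝ) • u = x := by rw [hu]; module
    simp only [hφ, this]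
  rw [hφ0, hφ1] at hmvt
  simpa [hf] using hmvt
end
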